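/- In a 1-nested hybridization network, every pair of nodes u, v has a unique lowest common ancestor (a common ancestor that is not a proper ancestor of any other common ancestor), and this node is a common ancestor of u and v that is a strict ancestor of at least one of them and a descendant of every node with those properties (i.e., it is their least common semistrict ancestor). -/

import Mathlib

/-- A walk in a directed graph `E` given by its (nonempty) list of vertices,
from `u` to `v`. -/
def IsWalk {V : Type*} (E : V → V → Prop) (l : List V) (u v : V) : Prop :=
  l.Chain' E ∧ l.head? = some u ∧ l.getLast? = some v

/-- In-degree of a node. -/
noncomputable def inDeg {V : Type*} [Fintype V] (E : V → V → Prop) (v : V) : ℕ :=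
  Nat.card {u // E u v}

/-- Out-degree of a node. -/
noncomputable def outDeg {V : Type*} [Fintype V] (E : V → V → Prop) (v : V) : ℕ :=
  Nat.card {w // E v w}

/-- The cluster of a node: the set of leaves (out-degree 0 nodes) that are
descendants of it. -/
noncomputable def cluster {V : Type*} [Fintype V] (E : V → V → Prop) (v : V) : Set V :=
  {l | outDeg E l = 0 ∧ Relation.ReflTransGen E v l}

/-- The intermediate (internal) nodes of a walk. -/
def internals {V : Type*} (l : List V) : List V := l.tail.dropLast

/-- The arcs of a walk. -/
def arcsOf {V : Type*} (l : List V) : List (V × V) := l.zip l.tail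

/-- A reticulation cycle with split node `x` and hybrid end `h`, consisting of the
two internally disjoint merge paths `p` and `q`. -/
def RetCycleAt {V : Type*} (E : V → V → Prop) (x h : V) (p q : List V) : Prop :=
  IsWalk E p x h ∧ IsWalk E q x h ∧ p ≠ q ∧ ∀ y ∈ internals p, y ∉ internals q

/-- A network is 1-nested when every pair of distinct reticulation cycles (for hybrid
nodes) have disjoint sets of arcs. -/
noncomputable def OneNested {V : Type*} [Fintype V] (E : V → V → Prop) : Prop :=
  ∀ x h p q x' h' p' q', 2 ≤ inDeg E h → 2 ≤ inDeg E h' →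
    RetCycleAt E x h p q → RetCycleAt E x' h' p' q' →
    ¬ (x = x' ∧ h = h' ∧ ({p, q} : Set (List V)) = {p', q'}) →
    ∀ a ∈ arcsOf p ++ arcsOf q, a ∉ arcsOf p' ++ arcsOf q'

/-- `x` is a common ancestor of `u` and `v`. -/
def CommonAnc {V : Type*} (E : V → V → Prop) (x u v : V) : Prop :=
  Relation.ReflTransGen E x u ∧ Relation.ReflTransGen E x v

/-- `x` is a lowest common ancestor of `u` and `v`: a common ancestor that is not a
proper ancestor of any other common ancestor. -/
def IsLCA {V : Type*} (E : V → V → Prop) (x u v : V) : Prop :=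
  CommonAnc E x u v ∧ ∀ y, CommonAnc E y u v → y ≠ x → ¬ Relation.TransGen E x y

section Helpers

open Relation List

variable {V : Type*} {E : V → V → Prop}

lemma rtg_trans_of_ne {a b : V} (h : Relation.ReflTransGen E a b) (hne : a ≠ b) :
    Relation.TransGen E a b := by
  rcases (Relation.reflTransGen_iff_eq_or_transGen.mp h) with h' | h'
  · exact absurd h'.symm hne
  · exact h'

lemma tg_rtg {a b c : V} (h1 : Relation.TransGen E a b) (h2 : Relation.ReflTransGen E b c) :
    Relation.TransGen E a c := by
  rcases (Relation.reflTransGen_iff_eq_or_transGen.mp h2) with h' | h'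
  · exact h' ▸ h1
  · exact h1.trans h'

lemma rtg_tg {a b c : V} (h1 : Relation.ReflTransGen E a b) (h2 : Relation.TransGen E b c) :
    Relation.TransGen E a c := by
  rcases (Relation.reflTransGen_iff_eq_or_transGen.mp h1) with h' | h'
  · exact h' ▸ h2
  · exact h'.trans h2

lemma chain_transGen_of_mem {c : V} :
    ∀ {T : List V} {a : V}, List.Chain' E (a :: T) → c ∈ T → Relation.TransGen E a c := by
  intro T
  induction T with
  | nil => intro a _ h; simp at h
  | cons b T' ih =>
    intro a hch hc
    obtain ⟨h1, h2⟩ := List.isChain_cons.mp hch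
    have hab : E a b := h1 b rfl
    rcases List.mem_cons.mp hc with rfl | hc
    · exact Relation.TransGen.single hab
    · exact (Relation.TransGen.single hab).trans (ih h2 hc)

lemma chain'_dropLast {l : List V} (h : List.Chain' E l) : List.Chain' E l.dropLast := by
  rcases eq_or_ne l [] with rfl | hne
  · exact List.isChain_nil
  · have h2 := List.dropLast_append_getLast hne
    rw [← h2] at h
    exact (List.isChain_append.mp h).1

lemma dropLast_append_ne {l₁ l₂ : List V} (h : l₂ ≠ []) :
    (l₁ ++ l₂).dropLast = l₁ ++ l₂.dropLast := by
  rw [List.dropLast_append]; simp [List.isEmpty_iff, h]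

lemma getLast?_some_of_ne_nil {l : List V} (h : l ≠ []) : ∃ a, l.getLast? = some a :=
  ⟨l.getLast h, List.getLast?_eq_getLast h⟩

lemma mem_of_getLast?' {l : List V} {a : V} (h : l.getLast? = some a) : a ∈ l := by
  obtain ⟨hne, h2⟩ := List.mem_getLast?_eq_getLast (Option.mem_def.mpr h)
  exact h2 ▸ List.getLast_mem hne

lemma head?_append_left {l₁ l₂ : List V} {a : V} (h : l₁.head? = some a) :
    (l₁ ++ l₂).head? = some a := by
  cases l₁ with
  | nil => simp at h
  | cons x t => simpa using h

lemma walk_ne_nil {l : List V} {u v : V} (h : IsWalk E l u v) : l ≠ [] := by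
  intro h0; rw [h0] at h; simp [IsWalk] at h

lemma walk_cons {l : List V} {u v : V} (h : IsWalk E l u v) : ∃ T, l = u :: T := by
  obtain ⟨_, h2, _⟩ := h
  cases l with
  | nil => simp at h2
  | cons a T => simp at h2; exact ⟨T, by rw [h2]⟩

lemma mem_head_of_walk {l : List V} {u v : V} (h : IsWalk E l u v) : u ∈ l := by
  obtain ⟨T, rfl⟩ := walk_cons h; exact List.mem_cons_self

lemma mem_last_of_walk {l : List V} {u v : V} (h : IsWalk E l u v) : v ∈ l :=
  mem_of_getLast?' h.2.2

lemma rtg_head_mem {l : List V} {u v c : V} (h : IsWalk E l u v) (hc : c ∈ l) :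
    Relation.ReflTransGen E u c := by
  obtain ⟨T, rfl⟩ := walk_cons h
  rcases List.mem_cons.mp hc with rfl | hc
  · exact Relation.ReflTransGen.refl
  · exact (chain_transGen_of_mem h.1 hc).to_reflTransGen

lemma walk_rtg {l : List V} {u v : V} (h : IsWalk E l u v) : Relation.ReflTransGen E u v :=
  rtg_head_mem h (mem_last_of_walk h)

lemma transGen_of_mem_left {I J : List V} {c : V} (hch : List.Chain' E (I ++ c :: J)) :
    ∀ a ∈ I, Relation.TransGen E a c := by
  intro a ha
  obtain ⟨I1, I2, rfl⟩ := List.append_of_mem ha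
  have h2 : List.Chain' E (a :: (I2 ++ c :: J)) := by
    rw [List.append_assoc, List.cons_append] at hch
    exact (List.isChain_append.mp hch).2.1
  exact chain_transGen_of_mem h2 (by simp)

lemma walk_split {l : List V} {u v c : V} (h : IsWalk E l u v) (hc : c ∈ l) :
    ∃ I t, l = I ++ c :: t ∧ IsWalk E (c :: t) c v ∧ (∀ a ∈ I, Relation.TransGen E a c) := by
  obtain ⟨I, t, rfl⟩ := List.append_of_mem hc
  refine ⟨I, t, rfl, ⟨(List.isChain_append.mp h.1).2.1, rfl, ?_⟩, transGen_of_mem_left h.1⟩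
  have h3 := h.2.2
  rwa [List.getLast?_append_of_ne_nil _ (List.cons_ne_nil c t)] at h3

lemma rtg_getLast_of_mem {l : List V} {a v : V} (hch : List.Chain' E l)
    (ha : a ∈ l) (hv : l.getLast? = some v) : Relation.ReflTransGen E a v := by
  obtain ⟨I, t, rfl⟩ := List.append_of_mem ha
  have h2 : List.Chain' E (a :: t) := (List.isChain_append.mp hch).2.1
  have hv2 : (a :: t).getLast? = some v := by
    rwa [List.getLast?_append_of_ne_nil _ (List.cons_ne_nil a t)] at hv
  exact walk_rtg ⟨h2, rfl, hv2⟩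

lemma transGen_getLast_of_mem_dropLast {l : List V} {a v : V} (hch : List.Chain' E l)
    (ha : a ∈ l.dropLast) (hv : l.getLast? = some v) : Relation.TransGen E a v := by
  obtain ⟨hne, hv2⟩ := List.mem_getLast?_eq_getLast (Option.mem_def.mpr hv)
  subst hv2
  have h2 : List.Chain' E (l.dropLast ++ l.getLast hne :: []) := by
    rw [show l.dropLast ++ l.getLast hne :: [] = l from List.dropLast_append_getLast hne]
    exact hch
  exact transGen_of_mem_left h2 a ha

lemma chain'_nodup (hacyc : ∀ w : V, ¬ Relation.TransGen E w w) :
    ∀ {l : List V}, List.Chain' E l → l.Nodup := by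
  intro l
  induction l with
  | nil => simp
  | cons a T ih =>
    intro h
    refine List.nodup_cons.mpr ⟨fun ha => hacyc a (chain_transGen_of_mem h ha), ih h.tail⟩

lemma walk_split_prefix {l : List V} {u v c : V} (h : IsWalk E l u v) (hc : c ∈ l)
    (hcu : c ≠ u) :
    ∃ P : List V, IsWalk E P u c ∧ P.dropLast ≠ [] ∧
      (∀ a ∈ P.dropLast, a ∈ l ∧ Relation.TransGen E a c) := by
  obtain ⟨T, rfl⟩ := walk_cons h
  have hcT : c ∈ T := by
    rcases List.mem_cons.mp hc with rfl | h'
    · exact absurd rfl hcu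
    · exact h'
  obtain ⟨I, t, rfl⟩ := List.append_of_mem hcT
  refine ⟨u :: I ++ [c], ⟨?_, rfl, List.getLast?_concat⟩,
    by rw [List.dropLast_concat]; simp, ?_⟩
  · have hh : List.Chain' E ((u :: I ++ [c]) ++ t) := by
      simpa using h.1
    exact (List.isChain_append.mp hh).1
  · intro a ha
    rw [List.dropLast_concat] at ha
    have hmem : a ∈ u :: (I ++ c :: t) := by
      rcases List.mem_cons.mp ha with rfl | h'
      · exact List.mem_cons_self
      · exact List.mem_cons_of_mem _ (List.mem_append_left _ h')
    refine ⟨hmem, ?_⟩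
    have hh : List.Chain' E ((u :: I) ++ c :: t) := by simpa using h.1
    exact transGen_of_mem_left hh a ha

lemma dropLast_ne_nil_of_walk {l : List V} {u v : V} (h : IsWalk E l u v) (hne : u ≠ v) :
    l.dropLast ≠ [] := by
  obtain ⟨T, rfl⟩ := walk_cons h
  cases T with
  | nil =>
    have := h.2.2; simp at this; exact absurd this hne
  | cons b T' => simp

end Helpers

section Arcs

open Relation List

variable {V : Type*} {E : V → V → Prop}

lemma arcsOf_cons_cons (a b : V) (t : List V) :
    arcsOf (a :: b :: t) = (a, b) :: arcsOf (b :: t) := rfl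

lemma arcsOf_subset_cons (x : V) (t : List V) : ∀ a ∈ arcsOf t, a ∈ arcsOf (x :: t) := by
  cases t with
  | nil => simp [arcsOf]
  | cons b t' =>
    intro a ha
    rw [arcsOf_cons_cons]
    exact List.mem_cons_of_mem _ ha

lemma arcsOf_subset_append (l₁ l₂ : List V) : ∀ a ∈ arcsOf l₂, a ∈ arcsOf (l₁ ++ l₂) := by
  induction l₁ with
  | nil => simp
  | cons e l₁' ih =>
    intro a ha
    rw [List.cons_append]
    exact arcsOf_subset_cons _ _ _ (ih a ha)

lemma arcsOf_append_mid {l₁ l₂ : List V} {aa bb : V} (h1 : l₁.getLast? = some aa)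
    (h2 : l₂.head? = some bb) : (aa, bb) ∈ arcsOf (l₁ ++ l₂) := by
  induction l₁ with
  | nil => simp at h1
  | cons e l₁' ih =>
    cases l₁' with
    | nil =>
      simp at h1
      subst h1
      obtain ⟨t2, rfl⟩ : ∃ t2, l₂ = bb :: t2 := by
        cases l₂ with
        | nil => simp at h2
        | cons x t => simp at h2; exact ⟨t, by rw [h2]⟩
      rw [List.singleton_append, arcsOf_cons_cons]
      exact List.mem_cons_self
    | cons f l₁'' =>
      have h1' : (f :: l₁'').getLast? = some aa := by rwa [List.getLast?_cons_cons] at h1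
      rw [List.cons_append]
      exact arcsOf_subset_cons _ _ _ (ih h1')

lemma chain'_of_arcs : ∀ {l : List V}, List.Chain' E l → ∀ {a b : V}, (a, b) ∈ arcsOf l → E a b := by
  intro l
  induction l with
  | nil => intro _ a b h; simp [arcsOf] at h
  | cons x t ih =>
    intro h a b hab
    cases t with
    | nil => simp [arcsOf] at hab
    | cons y t' =>
      rw [arcsOf_cons_cons] at hab
      rcases List.mem_cons.mp hab with heq | hab
      · injection heq with h1 h2
        subst h1; subst h2
        exact (List.isChain_cons_cons.mp h).1
      · exact ih h.tail hab

lemma arcs_succ_unique : ∀ {l : List V}, l.Nodup → ∀ {a b1 b2 : V},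
    (a, b1) ∈ arcsOf l → (a, b2) ∈ arcsOf l → b1 = b2 := by
  intro l
  induction l with
  | nil => intro _ a b1 b2 h; simp [arcsOf] at h
  | cons x t ih =>
    intro hnd a b1 b2 h1 h2
    cases t with
    | nil => simp [arcsOf] at h1
    | cons y t' =>
      rw [arcsOf_cons_cons] at h1 h2
      rcases List.mem_cons.mp h1 with he1 | h1' <;> rcases List.mem_cons.mp h2 with he2 | h2'
      · injection he1 with e1 e1'; injection he2 with e2 e2'
        rw [e1', e2']
      · exfalso
        injection he1 with e1 e1'
        subst e1
        exact (List.nodup_cons.mp hnd).1 (List.of_mem_zip h2').1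
      · exfalso
        injection he2 with e2 e2'
        subst e2
        exact (List.nodup_cons.mp hnd).1 (List.of_mem_zip h1').1
      · exact ih (List.nodup_cons.mp hnd).2 h1' h2'

lemma mem_dropLast_of_ne : ∀ {l : List V} {a v : V}, a ∈ l → l.getLast? = some v →
    a ≠ v → a ∈ l.dropLast := by
  intro l
  induction l with
  | nil => intro a v ha; simp at ha
  | cons x t ih =>
    intro a v ha hv hne
    cases t with
    | nil =>
      simp at ha hv
      exact absurd (ha.trans hv) hne
    | cons y t' =>
      rw [List.getLast?_cons_cons] at hv
      rw [List.dropLast_cons₂]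
      rcases List.mem_cons.mp ha with rfl | ha'
      · exact List.mem_cons_self
      · exact List.mem_cons_of_mem _ (ih ha' hv hne)

lemma exists_arc_of_mem_dropLast : ∀ {l : List V} {a : V}, a ∈ l.dropLast →
    ∃ b, (a, b) ∈ arcsOf l := by
  intro l
  induction l with
  | nil => intro a ha; simp at ha
  | cons x t ih =>
    intro a ha
    cases t with
    | nil => simp at ha
    | cons y t' =>
      rw [List.dropLast_cons₂] at ha
      rcases List.mem_cons.mp ha with rfl | ha'
      · exact ⟨y, by rw [arcsOf_cons_cons]; exact List.mem_cons_self⟩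
      · obtain ⟨b, hb⟩ := ih ha'
        exact ⟨b, arcsOf_subset_cons _ _ _ hb⟩

lemma arc_mem_of_sub {W p : List V} {ρ x c : V} (hnd : W.Nodup)
    (hsub : ∀ A ∈ arcsOf p, A ∈ arcsOf W) (hρ : ρ ∈ p) (hlast : p.getLast? = some c)
    (hρc : ρ ≠ c) (harc : (ρ, x) ∈ arcsOf W) : (ρ, x) ∈ arcsOf p := by
  obtain ⟨b, hb⟩ := exists_arc_of_mem_dropLast (mem_dropLast_of_ne hρ hlast hρc)
  have hbx : b = x := arcs_succ_unique hnd (hsub _ hb) harc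
  exact hbx ▸ hb

lemma chain_min (P : V → Prop) :
    ∀ (L : List V), List.Chain' E L → (∃ c ∈ L, P c) →
      ∃ s ∈ L, P s ∧ ∀ c ∈ L, P c → Relation.ReflTransGen E s c := by
  intro L
  induction L with
  | nil => intro _ hex; simp at hex
  | cons a T ih =>
    intro hL hex
    by_cases hPa : P a
    · refine ⟨a, List.mem_cons_self, hPa, ?_⟩
      intro c hc _
      rcases List.mem_cons.mp hc with rfl | hc
      · exact Relation.ReflTransGen.refl
      · exact (chain_transGen_of_mem hL hc).to_reflTransGen
    · obtain ⟨c0, hc0, hPc0⟩ := hex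
      rcases List.mem_cons.mp hc0 with rfl | hc0
      · exact absurd hPc0 hPa
      · obtain ⟨s, hs, hPs, hmin⟩ := ih hL.tail ⟨c0, hc0, hPc0⟩
        refine ⟨s, List.mem_cons_of_mem _ hs, hPs, ?_⟩
        intro c hc hPc
        rcases List.mem_cons.mp hc with rfl | hc
        · exact absurd hPc hPa
        · exact hmin c hc hPc

lemma chain_max (P : V → Prop) :
    ∀ (L : List V), List.Chain' E L → (∃ c ∈ L, P c) →
      ∃ s ∈ L, P s ∧ ∀ c ∈ L, P c → Relation.ReflTransGen E c s := by
  intro L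
  induction L with
  | nil => intro _ hex; simp at hex
  | cons a T ih =>
    intro hL hex
    by_cases hT : ∃ c ∈ T, P c
    · obtain ⟨s, hs, hPs, hmax⟩ := ih hL.tail hT
      refine ⟨s, List.mem_cons_of_mem _ hs, hPs, ?_⟩
      intro c hc hPc
      rcases List.mem_cons.mp hc with rfl | hc
      · exact (chain_transGen_of_mem hL hs).to_reflTransGen
      · exact hmax c hc hPc
    · obtain ⟨c0, hc0, hPc0⟩ := hex
      have hc0a : c0 = a := by
        rcases List.mem_cons.mp hc0 with h' | h'
        · exact h'
        · exact absurd ⟨c0, h', hPc0⟩ hT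
      subst hc0a
      refine ⟨c0, List.mem_cons_self, hPc0, ?_⟩
      intro c hc hPc
      rcases List.mem_cons.mp hc with rfl | hc
      · exact Relation.ReflTransGen.refl
      · exact absurd ⟨c, hc, hPc⟩ hT

lemma exists_walk {a b : V} (h : Relation.ReflTransGen E a b) : ∃ l, IsWalk E l a b := by
  induction h with
  | refl => exact ⟨[a], List.isChain_singleton a, rfl, rfl⟩
  | @tail b' c hab hbc ih =>
    obtain ⟨l, h1, h2, h3⟩ := ih
    refine ⟨l ++ [c], ?_, ?_, ?_⟩
    · refine List.isChain_append.mpr ⟨h1, List.isChain_singleton _, ?_⟩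
      intro x hx y hy
      simp only [Option.mem_def] at hx hy
      rw [h3] at hx
      injection hx with hx
      simp only [List.head?_cons] at hy
      injection hy with hy
      rw [← hx, ← hy]
      exact hbc
    · exact head?_append_left h2
    · simp

end Arcs

section Helpers2
open Relation List
variable {V : Type*} {E : V → V → Prop}

lemma penult_arc {l : List V} {u v w : V} (h : IsWalk E l u v)
    (hw : l.dropLast.getLast? = some w) : E w v := by
  have hrw : l.dropLast ++ [v] = l := List.dropLast_append_getLast? v (Option.mem_def.mpr h.2.2)
  have harc : (w, v) ∈ arcsOf l := by
    rw [← hrw]; exact arcsOf_append_mid hw rfl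
  exact chain'_of_arcs h.1 harc


end Helpers2

section MainDev

open Relation List

variable {V : Type*} {E : V → V → Prop}

lemma extract (hacyc : ∀ w : V, ¬ Relation.TransGen E w w) {W1 W2 : List V} {r c p1 p2 : V}
    (h1 : IsWalk E W1 r c) (h2 : IsWalk E W2 r c) (hrc : r ≠ c)
    (hp1 : W1.dropLast.getLast? = some p1) (hp2 : W2.dropLast.getLast? = some p2)
    (hne : p1 ≠ p2) :
    ∃ s p q, RetCycleAt E s c p q ∧ s ∈ W1.dropLast ∧ s ∈ W2.dropLast ∧
      (∀ a ∈ W1, Relation.ReflTransGen E s a → a ∈ p) ∧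
      (∀ A ∈ arcsOf p, A ∈ arcsOf W1) ∧ (∀ A ∈ arcsOf q, A ∈ arcsOf W2) := by
  -- r is in both dropLasts
  have hrd : ∀ {W : List V}, IsWalk E W r c → r ∈ W.dropLast := by
    intro W hW
    obtain ⟨T, rfl⟩ := walk_cons hW
    cases T with
    | nil => have := hW.2.2; simp at this; exact absurd this hrc
    | cons b T' => rw [List.dropLast_cons₂]; exact List.mem_cons_self
  obtain ⟨s, hs1, hs2, hmax⟩ := chain_max (E := E) (· ∈ W2.dropLast) W1.dropLast
    (chain'_dropLast h1.1) ⟨r, hrd h1, hrd h2⟩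
  have hsc : Relation.TransGen E s c := transGen_getLast_of_mem_dropLast h1.1 hs1 h1.2.2
  have hsc' : s ≠ c := fun h => hacyc c (h ▸ hsc)
  obtain ⟨I1, t1, hW1, hwp, hI1⟩ := walk_split h1 ((List.dropLast_sublist _).subset hs1)
  obtain ⟨I2, t2, hW2, hwq, hI2⟩ := walk_split h2 ((List.dropLast_sublist _).subset hs2)
  have ht1 : t1 ≠ [] := by
    intro h
    subst h
    have h' := hwp.2.2
    simp only [List.getLast?_singleton, Option.some.injEq] at h'
    exact hsc' h'
  have ht2 : t2 ≠ [] := by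
    intro h
    subst h
    have h' := hwq.2.2
    simp only [List.getLast?_singleton, Option.some.injEq] at h'
    exact hsc' h'
  have hd1 : W1.dropLast = I1 ++ (s :: t1).dropLast := by
    rw [hW1, dropLast_append_ne (List.cons_ne_nil s t1)]
  have hd2 : W2.dropLast = I2 ++ (s :: t2).dropLast := by
    rw [hW2, dropLast_append_ne (List.cons_ne_nil s t2)]
  have hdc1 : (s :: t1).dropLast = s :: t1.dropLast := by
    cases t1 with
    | nil => exact absurd rfl ht1
    | cons y t' => rw [List.dropLast_cons₂]
  have hdc2 : (s :: t2).dropLast = s :: t2.dropLast := by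
    cases t2 with
    | nil => exact absurd rfl ht2
    | cons y t' => rw [List.dropLast_cons₂]
  have hpd1 : (s :: t1).dropLast.getLast? = some p1 := by
    rw [hd1, List.getLast?_append_of_ne_nil _ (by rw [hdc1]; exact List.cons_ne_nil _ _)] at hp1
    exact hp1
  have hpd2 : (s :: t2).dropLast.getLast? = some p2 := by
    rw [hd2, List.getLast?_append_of_ne_nil _ (by rw [hdc2]; exact List.cons_ne_nil _ _)] at hp2
    exact hp2
  have hpq : (s :: t1) ≠ (s :: t2) := by
    intro h
    apply hne
    rw [h] at hpd1
    rw [hpd1] at hpd2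
    injection hpd2
  have hint : ∀ y ∈ internals (s :: t1), y ∉ internals (s :: t2) := by
    intro y hy1 hy2
    have hyt1 : y ∈ t1 := (List.dropLast_sublist _).subset hy1
    have hyt2d : y ∈ t2.dropLast := hy2
    have hstg : Relation.TransGen E s y := chain_transGen_of_mem hwp.1 hyt1
    have hy1' : y ∈ W1.dropLast := by
      rw [hd1, hdc1]
      exact List.mem_append_right _ (List.mem_cons_of_mem _ hy1)
    have hy2' : y ∈ W2.dropLast := by
      rw [hd2, hdc2]
      exact List.mem_append_right _ (List.mem_cons_of_mem _ hyt2d)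
    exact hacyc s (tg_rtg hstg (hmax y hy1' hy2'))
  refine ⟨s, s :: t1, s :: t2, ⟨hwp, hwq, hpq, hint⟩, hs1, hs2, ?_, ?_, ?_⟩
  · intro a ha hsa
    rw [hW1] at ha
    rcases List.mem_append.mp ha with ha' | ha'
    · exact absurd (tg_rtg (hI1 a ha') hsa) (hacyc a)
    · exact ha'
  · rw [hW1]; exact arcsOf_subset_append _ _
  · rw [hW2]; exact arcsOf_subset_append _ _

lemma two_le_inDeg {V : Type*} [Fintype V] {E : V → V → Prop} {a b c : V}
    (h1 : E a c) (h2 : E b c) (hne : a ≠ b) : 2 ≤ inDeg E c := by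
  have hnt : Nontrivial {u // E u c} := ⟨⟨a, h1⟩, ⟨b, h2⟩, by simpa using hne⟩
  exact Finite.one_lt_card_iff_nontrivial.mpr hnt

end MainDev

section MainDev2

open Relation List

variable {V : Type*} {E : V → V → Prop}

lemma walk_comp {l m : List V} {u a v : V} (hl : IsWalk E l u a) (hm : IsWalk E m a v) :
    IsWalk E (l.dropLast ++ m) u v := by
  obtain ⟨T, rfl⟩ := walk_cons hl
  cases T with
  | nil =>
    have hau : a = u := by
      have h' := hl.2.2
      simp only [List.getLast?_singleton, Option.some.injEq] at h'
      exact h'.symm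
    subst hau
    simpa using hm
  | cons b T' =>
    refine ⟨?_, ?_, ?_⟩
    · refine List.isChain_append.mpr ⟨chain'_dropLast hl.1, hm.1, ?_⟩
      intro x hx y hy
      simp only [Option.mem_def] at hx hy
      have hE : E x a := penult_arc hl hx
      have hya : y = a := by rw [hm.2.1] at hy; injection hy with h'; exact h'.symm
      rw [hya]; exact hE
    · rw [List.dropLast_cons₂]
      exact head?_append_left rfl
    · rw [List.getLast?_append_of_ne_nil _ (walk_ne_nil hm)]
      exact hm.2.2

lemma subM {V : Type*} [Fintype V] {E : V → V → Prop} {r a b ρa : V} {Ra Rb : List V}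
    (hacyc : ∀ w : V, ¬ Relation.TransGen E w w)
    (hab : ¬ Relation.ReflTransGen E a b) (hba : ¬ Relation.ReflTransGen E b a)
    (hRa : IsWalk E Ra r a) (hRb : IsWalk E Rb r b)
    (hρa : Ra.dropLast.getLast? = some ρa)
    {d : V} (hda : Relation.ReflTransGen E a d) (hdb : Relation.ReflTransGen E b d) :
    ∃ c s pp qq, RetCycleAt E s c pp qq ∧ 2 ≤ inDeg E c ∧
      ((ρa, a) ∈ arcsOf pp ++ arcsOf qq) ∧
      Relation.ReflTransGen E a c ∧ Relation.ReflTransGen E b c ∧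
      Relation.ReflTransGen E c d := by
  obtain ⟨A, hA⟩ := exists_walk hda
  obtain ⟨B, hB⟩ := exists_walk hdb
  obtain ⟨c, hcA, hcB, hmin⟩ := chain_min (E := E) (· ∈ B) A hA.1
    ⟨d, mem_last_of_walk hA, mem_last_of_walk hB⟩
  have hac : Relation.ReflTransGen E a c := rtg_head_mem hA hcA
  have hbc : Relation.ReflTransGen E b c := rtg_head_mem hB hcB
  have hca : c ≠ a := fun h => hba (h ▸ hbc)
  have hcb : c ≠ b := fun h => hab (h ▸ hac)
  have hrc : r ≠ c := by
    intro h
    exact hab (Relation.ReflTransGen.trans hac (h ▸ walk_rtg hRb))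
  obtain ⟨P, hP, hPd, hPmem⟩ := walk_split_prefix hA hcA hca
  obtain ⟨Q, hQ, hQd, hQmem⟩ := walk_split_prefix hB hcB hcb
  have hW1 : IsWalk E (Ra.dropLast ++ P) r c := walk_comp hRa hP
  have hW2 : IsWalk E (Rb.dropLast ++ Q) r c := walk_comp hRb hQ
  obtain ⟨π1, hπ1⟩ := getLast?_some_of_ne_nil hPd
  obtain ⟨π2, hπ2⟩ := getLast?_some_of_ne_nil hQd
  have hπ1' : (Ra.dropLast ++ P).dropLast.getLast? = some π1 := by
    rw [dropLast_append_ne (walk_ne_nil hP), List.getLast?_append_of_ne_nil _ hPd]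
    exact hπ1
  have hπ2' : (Rb.dropLast ++ Q).dropLast.getLast? = some π2 := by
    rw [dropLast_append_ne (walk_ne_nil hQ), List.getLast?_append_of_ne_nil _ hQd]
    exact hπ2
  obtain ⟨hπ1A, hπ1c⟩ := hPmem π1 (mem_of_getLast?' hπ1)
  obtain ⟨hπ2B, hπ2c⟩ := hQmem π2 (mem_of_getLast?' hπ2)
  have hπ1nB : π1 ∉ B := by
    intro h
    exact hacyc c (rtg_tg (hmin π1 hπ1A h) hπ1c)
  have hππ : π1 ≠ π2 := fun h => hπ1nB (h ▸ hπ2B)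
  obtain ⟨s, pp, qq, hret, hs1, hs2, hmemp, harcs1, harcs2⟩ :=
    extract hacyc hW1 hW2 hrc hπ1' hπ2' hππ
  -- locate s
  rw [dropLast_append_ne (walk_ne_nil hP)] at hs1
  rw [dropLast_append_ne (walk_ne_nil hQ)] at hs2
  have hsRa : s ∈ Ra.dropLast := by
    rcases List.mem_append.mp hs1 with h' | h'
    · exact h'
    · exfalso
      obtain ⟨hsA, hsc⟩ := hPmem s h'
      rcases List.mem_append.mp hs2 with h'' | h''
      · exact hab (Relation.ReflTransGen.trans (rtg_head_mem hA hsA)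
          (rtg_getLast_of_mem hRb.1 ((List.dropLast_sublist _).subset h'') hRb.2.2))
      · exact hacyc c (rtg_tg (hmin s hsA (hQmem s h'').1) hsc)
  have hsρ : Relation.ReflTransGen E s ρa :=
    rtg_getLast_of_mem (chain'_dropLast hRa.1) hsRa hρa
  have hρW1 : ρa ∈ Ra.dropLast ++ P := List.mem_append_left _ (mem_of_getLast?' hρa)
  have hρpp : ρa ∈ pp := hmemp ρa hρW1 hsρ
  have hEρa : E ρa a := penult_arc hRa hρa
  have hρc : ρa ≠ c := by
    intro h
    exact hacyc c (Relation.TransGen.head' (h ▸ hEρa) hac)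
  have harcW1 : (ρa, a) ∈ arcsOf (Ra.dropLast ++ P) := arcsOf_append_mid hρa hP.2.1
  have harcpp : (ρa, a) ∈ arcsOf pp :=
    arc_mem_of_sub (chain'_nodup hacyc hW1.1) harcs1 hρpp hret.1.2.2 hρc harcW1
  have hEπ1 : E π1 c := penult_arc hW1 hπ1'
  have hEπ2 : E π2 c := penult_arc hW2 hπ2'
  exact ⟨c, s, pp, qq, hret, two_le_inDeg hEπ1 hEπ2 hππ,
    List.mem_append_left _ harcpp, hac, hbc,
    rtg_getLast_of_mem hA.1 hcA hA.2.2⟩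

lemma subS {V : Type*} [Fintype V] {E : V → V → Prop} {r x ρ t : V} {R L : List V}
    (hacyc : ∀ w : V, ¬ Relation.TransGen E w w)
    (hR : IsWalk E R r x) (hρ : R.dropLast.getLast? = some ρ)
    (hxt : Relation.ReflTransGen E x t) (hL : IsWalk E L r t) (hxL : x ∉ L) :
    ∃ c s pp qq, RetCycleAt E s c pp qq ∧ 2 ≤ inDeg E c ∧
      ((ρ, x) ∈ arcsOf pp ++ arcsOf qq) ∧
      Relation.TransGen E x c ∧ Relation.ReflTransGen E c t := by
  obtain ⟨X, hX⟩ := exists_walk hxt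
  obtain ⟨c, hcX, hcL, hmin⟩ := chain_min (E := E) (· ∈ L) X hX.1
    ⟨t, mem_last_of_walk hX, mem_last_of_walk hL⟩
  have hcx : c ≠ x := fun h => hxL (h ▸ hcL)
  have hxc : Relation.TransGen E x c :=
    rtg_trans_of_ne (rtg_head_mem hX hcX) (Ne.symm hcx)
  have hrc : r ≠ c := by
    intro h
    subst h
    exact hacyc r (rtg_tg (walk_rtg hR) hxc)
  obtain ⟨P, hP, hPd, hPmem⟩ := walk_split_prefix hX hcX hcx
  obtain ⟨Q, hQ, hQd, hQmem⟩ := walk_split_prefix hL hcL hrc.symm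
  have hW1 : IsWalk E (R.dropLast ++ P) r c := walk_comp hR hP
  obtain ⟨π1, hπ1⟩ := getLast?_some_of_ne_nil hPd
  obtain ⟨π2, hπ2⟩ := getLast?_some_of_ne_nil hQd
  have hπ1' : (R.dropLast ++ P).dropLast.getLast? = some π1 := by
    rw [dropLast_append_ne (walk_ne_nil hP), List.getLast?_append_of_ne_nil _ hPd]
    exact hπ1
  obtain ⟨hπ1X, hπ1c⟩ := hPmem π1 (mem_of_getLast?' hπ1)
  obtain ⟨hπ2L, hπ2c⟩ := hQmem π2 (mem_of_getLast?' hπ2)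
  have hπ1nL : π1 ∉ L := by
    intro h
    exact hacyc c (rtg_tg (hmin π1 hπ1X h) hπ1c)
  have hππ : π1 ≠ π2 := fun h => hπ1nL (h ▸ hπ2L)
  obtain ⟨s, pp, qq, hret, hs1, hs2, hmemp, harcs1, harcs2⟩ :=
    extract hacyc hW1 hQ hrc hπ1' hπ2 hππ
  rw [dropLast_append_ne (walk_ne_nil hP)] at hs1
  have hsR : s ∈ R.dropLast := by
    rcases List.mem_append.mp hs1 with h' | h'
    · exact h'
    · exfalso
      obtain ⟨hsX, hsc⟩ := hPmem s h'
      exact hacyc c (rtg_tg (hmin s hsX (hQmem s hs2).1) hsc)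
  have hsρ : Relation.ReflTransGen E s ρ :=
    rtg_getLast_of_mem (chain'_dropLast hR.1) hsR hρ
  have hρW1 : ρ ∈ R.dropLast ++ P := List.mem_append_left _ (mem_of_getLast?' hρ)
  have hρpp : ρ ∈ pp := hmemp ρ hρW1 hsρ
  have hEρ : E ρ x := penult_arc hR hρ
  have hρc : ρ ≠ c := by
    intro h
    exact hacyc c (tg_rtg (Relation.TransGen.single (h ▸ hEρ)) hxc.to_reflTransGen)
  have harcW1 : (ρ, x) ∈ arcsOf (R.dropLast ++ P) := arcsOf_append_mid hρ hP.2.1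
  have harcpp : (ρ, x) ∈ arcsOf pp :=
    arc_mem_of_sub (chain'_nodup hacyc hW1.1) harcs1 hρpp hret.1.2.2 hρc harcW1
  have hEπ1 : E π1 c := penult_arc hW1 hπ1'
  have hEπ2 : E π2 c := penult_arc hQ hπ2
  exact ⟨c, s, pp, qq, hret, two_le_inDeg hEπ1 hEπ2 hππ,
    List.mem_append_left _ harcpp, hxc,
    rtg_getLast_of_mem hX.1 hcX hX.2.2⟩

lemma core {V : Type*} [Fintype V] {E : V → V → Prop} {r : V}
    (hacyc : ∀ w : V, ¬ Relation.TransGen E w w)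
    (hroot : ∀ v, Relation.ReflTransGen E r v)
    (hnested : OneNested E) {a b : V}
    (hab : ¬ Relation.ReflTransGen E a b) (hba : ¬ Relation.ReflTransGen E b a)
    {d0 : V} (h0a : Relation.ReflTransGen E a d0) (h0b : Relation.ReflTransGen E b d0) :
    ∃ w, Relation.ReflTransGen E a w ∧ Relation.ReflTransGen E b w ∧
      ∀ d, Relation.ReflTransGen E a d → Relation.ReflTransGen E b d →
        Relation.ReflTransGen E w d := by
  obtain ⟨Ra, hRa⟩ := exists_walk (hroot a)
  obtain ⟨Rb, hRb⟩ := exists_walk (hroot b)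
  have hra : r ≠ a := fun h => hab (h ▸ hroot b)
  obtain ⟨ρa, hρa⟩ := getLast?_some_of_ne_nil (dropLast_ne_nil_of_walk hRa hra)
  obtain ⟨c0, s0, pp0, qq0, hret0, hdeg0, harc0, hac0, hbc0, _⟩ :=
    subM hacyc hab hba hRa hRb hρa h0a h0b
  refine ⟨c0, hac0, hbc0, ?_⟩
  intro d hda hdb
  obtain ⟨c, s, pp, qq, hret, hdeg, harc, _, _, hcd⟩ :=
    subM hacyc hab hba hRa hRb hρa hda hdb
  have hcc : c = c0 := by
    by_contra hnec
    exact hnested s c pp qq s0 c0 pp0 qq0 hdeg hdeg0 hret hret0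
      (fun h => hnec h.2.1) _ harc harc0
  exact hcc ▸ hcd

end MainDev2

/-- In a 1-nested hybridization network, every pair of nodes has a unique lowest
common ancestor, and it is their least common semistrict ancestor: a common ancestor
of both that is a strict ancestor of at least one of them, and a descendant of every
node with these properties. -/
theorem stmt14 {V : Type*} [Fintype V] (E : V → V → Prop) (r : V)
    (hacyc : ∀ v, ¬ Relation.TransGen E v v)
    (hroot : ∀ v, Relation.ReflTransGen E r v)
    (hin2 : ∀ v, inDeg E v ≤ 2)
    (hnod1 : ∀ v, inDeg E v ≤ 1 → outDeg E v ≠ 1)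
    (hnested : OneNested E)
    (u v : V) :
    (∃! x, IsLCA E x u v) ∧
    ∀ x, IsLCA E x u v →
      ((∀ l : List V, IsWalk E l r u → x ∈ l) ∨ (∀ l : List V, IsWalk E l r v → x ∈ l)) ∧
      ∀ y, CommonAnc E y u v →
        ((∀ l : List V, IsWalk E l r u → y ∈ l) ∨ (∀ l : List V, IsWalk E l r v → y ∈ l)) →
        Relation.ReflTransGen E y x := by
  classical
  have antisym : ∀ {p q : V}, Relation.ReflTransGen E p q → Relation.ReflTransGen E q p →
      p = q := by
    intro p q hpq hqp
    by_contra hne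
    exact hacyc p (tg_rtg (rtg_trans_of_ne hpq hne) hqp)
  have key : ∀ x, IsLCA E x u v → ∀ y, CommonAnc E y u v → Relation.ReflTransGen E y x := by
    intro x hx y hy
    by_cases hyx : Relation.ReflTransGen E y x
    · exact hyx
    by_cases hxy : Relation.ReflTransGen E x y
    · have hne : y ≠ x := fun h => hyx (h ▸ Relation.ReflTransGen.refl)
      exact absurd (rtg_trans_of_ne hxy (Ne.symm hne)) (hx.2 y hy hne)
    · obtain ⟨w, hxw, hyw, hmin⟩ := core hacyc hroot hnested hxy hyx hx.1.1 hy.1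
      have hCA : CommonAnc E w u v := ⟨hmin u hx.1.1 hy.1, hmin v hx.1.2 hy.2⟩
      have hwx : w ≠ x := fun h => hyx (h ▸ hyw)
      exact absurd (rtg_trans_of_ne hxw (Ne.symm hwx)) (hx.2 w hCA hwx)
  have hexists : ∃ x, IsLCA E x u v := by
    have hwf : WellFounded (fun p q : V => Relation.TransGen E q p) := by
      haveI : IsTrans V (fun p q : V => Relation.TransGen E q p) :=
        ⟨fun a b c h1 h2 => h2.trans h1⟩
      haveI : IsIrrefl V (fun p q : V => Relation.TransGen E q p) := ⟨fun a h => hacyc a h⟩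
      exact Finite.wellFounded_of_trans_of_irrefl _
    obtain ⟨x, hxS, hmin⟩ := hwf.has_min {z | CommonAnc E z u v} ⟨r, hroot u, hroot v⟩
    exact ⟨x, hxS, fun y hy _ => hmin y hy⟩
  obtain ⟨x0, hx0⟩ := hexists
  constructor
  · exact ⟨x0, hx0, fun x' hx' => antisym (key x0 hx0 x' hx'.1) (key x' hx' x0 hx0.1)⟩
  · intro x hx
    constructor
    · by_contra hcon
      push_neg at hcon
      obtain ⟨⟨Lu, hLu, hxLu⟩, ⟨Lv, hLv, hxLv⟩⟩ := hcon
      by_cases hxr : x = r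
      · exact hxLu (hxr ▸ mem_head_of_walk hLu)
      obtain ⟨R, hR⟩ := exists_walk (hroot x)
      obtain ⟨ρ, hρ⟩ := getLast?_some_of_ne_nil (dropLast_ne_nil_of_walk hR (Ne.symm hxr))
      obtain ⟨c1, s1, pp1, qq1, hret1, hdeg1, harc1, hxc1, hc1u⟩ :=
        subS hacyc hR hρ hx.1.1 hLu hxLu
      obtain ⟨c2, s2, pp2, qq2, hret2, hdeg2, harc2, hxc2, hc2v⟩ :=
        subS hacyc hR hρ hx.1.2 hLv hxLv
      have hcc : c1 = c2 := by
        by_contra hnec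
        exact hnested s1 c1 pp1 qq1 s2 c2 pp2 qq2 hdeg1 hdeg2 hret1 hret2
          (fun h => hnec h.2.1) _ harc1 harc2
      have hCA : CommonAnc E c1 u v := ⟨hc1u, hcc ▸ hc2v⟩
      have hc1x : c1 ≠ x := fun h => hacyc x (h ▸ hxc1)
      exact hx.2 c1 hCA hc1x hxc1
    · intro y hy _
      exact key x hx y hy
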